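/- Let G be a group, let S ⊆ G be a finite nonempty subset, and let C > 0 and d ≥ 0 be real numbers such that |Sⁿ| ≤ C·n^d for all integers n ≥ 1, where Sⁿ denotes the n-fold product set S·S·⋯·S. Then there are infinitely many n with |S^{2n}| < (2^d + 1)·|Sⁿ|; that is, for every integer N there exists n ≥ N such that |S^{2n}| < (2^d + 1)·|Sⁿ|. (Infinitely many balls Sⁿ have doubling constant less than 2^d + 1, since Sⁿ·Sⁿ = S^{2n}.) -/

import Mathlib

open Pointwise

/-- If `|Sⁿ| ≤ C·n^d` for all `n ≥ 1`, then infinitely many of the balls `Sⁿ` have doubling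
constant less than `2^d + 1`, i.e. `|S^{2n}| < (2^d + 1)|Sⁿ|`. -/
theorem polynomial_growth_small_doubling (G : Type*) [Group G] [DecidableEq G]
    (S : Finset G) (hS : S.Nonempty) (C d : ℝ) (hC : 0 < C) (hd : 0 ≤ d)
    (h : ∀ n : ℕ, 1 ≤ n → ((S ^ n).card : ℝ) ≤ C * (n : ℝ) ^ d) :
    ∀ N : ℕ, ∃ n : ℕ, N ≤ n ∧
      ((S ^ (2 * n)).card : ℝ) < ((2 : ℝ) ^ d + 1) * (S ^ n).card := by
  intro N
  by_contra hcon
  push_neg at hcon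
  set M := max N 1 with hMdef
  have hM1 : 1 ≤ M := le_max_right _ _
  have hNM : N ≤ M := le_max_left _ _
  have h2d : (0:ℝ) < (2:ℝ) ^ d := Real.rpow_pos_of_pos (by norm_num) d
  have ha : (1:ℝ) ≤ (S ^ M).card := by
    have : (S ^ M).Nonempty := hS.pow
    exact_mod_cast Finset.card_pos.2 this
  have key : ∀ k : ℕ, ((2:ℝ)^d + 1)^k * (S ^ M).card ≤ ((S ^ (2^k * M)).card : ℝ) := by
    intro k
    induction k with
    | zero => simp
    | succ k ih =>
      have hpos : 0 < 2 ^ k * M := Nat.mul_pos (Nat.two_pow_pos k) (by omega)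
      have h1 := hcon (2 ^ k * M) (le_trans hNM (Nat.le_mul_of_pos_left M
        (Nat.two_pow_pos k)))
      have heq : 2 * (2 ^ k * M) = 2 ^ (k + 1) * M := by ring
      calc ((2:ℝ)^d + 1)^(k+1) * (S ^ M).card
          = ((2:ℝ)^d + 1) * (((2:ℝ)^d + 1)^k * (S ^ M).card) := by ring
        _ ≤ ((2:ℝ)^d + 1) * ((S ^ (2^k * M)).card : ℝ) := by
            apply mul_le_mul_of_nonneg_left ih (by positivity)
        _ ≤ ((S ^ (2 * (2^k * M))).card : ℝ) := h1
        _ = ((S ^ (2^(k+1) * M)).card : ℝ) := by rw [heq]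
  have hbound : ∀ k : ℕ, (((2:ℝ)^d + 1) / (2:ℝ)^d)^k ≤ C * (M:ℝ)^d := by
    intro k
    have hk1 : 1 ≤ 2 ^ k * M := Nat.one_le_iff_ne_zero.mpr (by positivity)
    have h2 : ((S ^ (2^k * M)).card : ℝ) ≤ C * ((2^k * M : ℕ) : ℝ)^d := h _ hk1
    have hcast : ((2^k * M : ℕ) : ℝ)^d = ((2:ℝ)^d)^k * (M:ℝ)^d := by
      push_cast
      rw [Real.mul_rpow (by positivity) (by positivity)]
      congr 1
      rw [← Real.rpow_natCast 2 k, ← Real.rpow_mul (by norm_num : (0:ℝ) ≤ 2),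
        mul_comm, Real.rpow_mul (by norm_num : (0:ℝ) ≤ 2), Real.rpow_natCast]
    have h3 : ((2:ℝ)^d + 1)^k ≤ C * (M:ℝ)^d * ((2:ℝ)^d)^k := by
      have := le_trans (le_trans (le_mul_of_one_le_right (by positivity) ha) (key k)) h2
      rw [hcast] at this
      nlinarith [this]
    rw [div_pow, div_le_iff₀ (by positivity)]
    exact h3
  have hr : 1 < ((2:ℝ)^d + 1) / (2:ℝ)^d := (one_lt_div h2d).2 (by linarith)
  obtain ⟨k, hk⟩ := pow_unbounded_of_one_lt (C * (M:ℝ)^d) hr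
  exact absurd (hbound k) (not_le.2 hk)
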